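/- Let p be a prime, K a finite extension of ℚ_p with valuation v normalized so v(p) = 1, c ∈ K with -p/(p-1) < v(c) < 0, and f(z) = z^p - c. Suppose a ∈ K satisfies v(α) = v(c)/p for every iterated preimage α of a. Fix sequences (αₙ), (βₙ) of preimages with α₀ = β₀ = a, f(α_{n+1}) = αₙ, f(β_{n+1}) = βₙ, and β₁ ≠ α₁. Then v(βₙ - αₙ) = (v(c)/p + 1/(p-1)) / p^{n-1} for all n ≥ 1. -/

import Mathlib

set_option linter.unusedSectionVars false
section Helpers

variable {L : Type*} [Field L] [CharZero L]

private lemma v_one (v : L → ℝ)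
    (hmul : ∀ x y : L, x ≠ 0 → y ≠ 0 → v (x * y) = v x + v y) : v 1 = 0 := by
  have h := hmul 1 1 one_ne_zero one_ne_zero
  simp at h; linarith

private lemma v_neg (v : L → ℝ)
    (hmul : ∀ x y : L, x ≠ 0 → y ≠ 0 → v (x * y) = v x + v y)
    (x : L) (hx : x ≠ 0) : v (-x) = v x := by
  have h1 : v (-1 : L) = 0 := by
    have h := hmul (-1) (-1) (by norm_num) (by norm_num)
    simp [v_one v hmul] at h; linarith
  have h := hmul (-1) x (by norm_num) hx
  simp [h1] at h
  simpa using h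

private lemma v_pow (v : L → ℝ)
    (hmul : ∀ x y : L, x ≠ 0 → y ≠ 0 → v (x * y) = v x + v y)
    (x : L) (hx : x ≠ 0) : ∀ k : ℕ, v (x ^ k) = k * v x := by
  intro k
  induction k with
  | zero => simp [v_one v hmul]
  | succ k ih =>
    rw [pow_succ, hmul _ _ (pow_ne_zero k hx) hx, ih]
    push_cast; ring

private lemma v_nat_nonneg (v : L → ℝ)
    (hmul : ∀ x y : L, x ≠ 0 → y ≠ 0 → v (x * y) = v x + v y)
    (hadd : ∀ x y : L, x ≠ 0 → y ≠ 0 → x + y ≠ 0 → min (v x) (v y) ≤ v (x + y)) :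
    ∀ n : ℕ, n ≠ 0 → 0 ≤ v (n : L) := by
  intro n
  induction n with
  | zero => intro h; exact absurd rfl h
  | succ n ih =>
    intro _
    rcases Nat.eq_zero_or_pos n with h0 | h0
    · subst h0; simp [v_one v hmul]
    · have hn : (n : L) ≠ 0 := Nat.cast_ne_zero.2 h0.ne'
      have hn1 : ((n : L) + 1) ≠ 0 := by
        have : ((n + 1 : ℕ) : L) ≠ 0 := Nat.cast_ne_zero.2 (Nat.succ_ne_zero n)
        push_cast at this; exact this
      have h := hadd (n : L) 1 hn one_ne_zero hn1
      have := ih h0.ne'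
      have hv1 : v (1 : L) = 0 := v_one v hmul
      push_cast
      calc (0 : ℝ) ≤ min (v (n : L)) (v (1 : L)) := le_min this (by rw [hv1])
        _ ≤ v ((n : L) + 1) := h

private lemma v_sum_le (v : L → ℝ)
    (hadd : ∀ x y : L, x ≠ 0 → y ≠ 0 → x + y ≠ 0 → min (v x) (v y) ≤ v (x + y))
    {ι : Type*} (b : ℝ) (f : ι → L) :
    ∀ (S : Finset ι), (∀ i ∈ S, f i ≠ 0) → (∀ i ∈ S, b ≤ v (f i)) →
      (∑ i ∈ S, f i) ≠ 0 → b ≤ v (∑ i ∈ S, f i) := by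
  intro S
  induction S using Finset.cons_induction with
  | empty => intro _ _ hs; simp at hs
  | cons a S ha ih =>
    intro h0 hb hs
    rw [Finset.sum_cons] at hs ⊢
    by_cases hR : (∑ i ∈ S, f i) = 0
    · rw [hR, add_zero]
      exact hb a (Finset.mem_cons_self a S)
    · have hmin := hadd (f a) _ (h0 a (Finset.mem_cons_self a S)) hR hs
      have h1 := hb a (Finset.mem_cons_self a S)
      have h2 := ih (fun i hi => h0 i (Finset.mem_cons_of_mem hi))
        (fun i hi => hb i (Finset.mem_cons_of_mem hi)) hR
      exact le_trans (le_min h1 h2) hmin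

private lemma v_sum_lt (v : L → ℝ)
    (hadd : ∀ x y : L, x ≠ 0 → y ≠ 0 → x + y ≠ 0 → min (v x) (v y) ≤ v (x + y))
    {ι : Type*} (b : ℝ) (f : ι → L) :
    ∀ (S : Finset ι), (∀ i ∈ S, f i ≠ 0) → (∀ i ∈ S, b < v (f i)) →
      (∑ i ∈ S, f i) ≠ 0 → b < v (∑ i ∈ S, f i) := by
  intro S
  induction S using Finset.cons_induction with
  | empty => intro _ _ hs; simp at hs
  | cons a S ha ih =>
    intro h0 hb hs
    rw [Finset.sum_cons] at hs ⊢
    by_cases hR : (∑ i ∈ S, f i) = 0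
    · rw [hR, add_zero]
      exact hb a (Finset.mem_cons_self a S)
    · have hmin := hadd (f a) _ (h0 a (Finset.mem_cons_self a S)) hR hs
      have h1 := hb a (Finset.mem_cons_self a S)
      have h2 := ih (fun i hi => h0 i (Finset.mem_cons_of_mem hi))
        (fun i hi => hb i (Finset.mem_cons_of_mem hi)) hR
      exact lt_of_lt_of_le (lt_min h1 h2) hmin

private lemma v_dominant (v : L → ℝ)
    (hmul : ∀ x y : L, x ≠ 0 → y ≠ 0 → v (x * y) = v x + v y)
    (hadd : ∀ x y : L, x ≠ 0 → y ≠ 0 → x + y ≠ 0 → min (v x) (v y) ≤ v (x + y))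
    (x y : L) (hx : x ≠ 0) (hy : y ≠ 0) (hlt : v x < v y) :
    x + y ≠ 0 ∧ v (x + y) = v x := by
  have hne : x + y ≠ 0 := by
    intro h
    have hx' : x = -y := eq_neg_of_add_eq_zero_left h
    rw [hx', v_neg v hmul y hy] at hlt
    exact lt_irrefl _ hlt
  refine ⟨hne, le_antisymm ?_ ?_⟩
  · have hny : (-y) ≠ 0 := neg_ne_zero.2 hy
    have hxy : (x + y) + (-y) ≠ 0 := by
      rw [add_neg_cancel_right]; exact hx
    have h := hadd (x + y) (-y) hne hny hxy
    rw [add_neg_cancel_right, v_neg v hmul y hy] at h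
    by_contra hcon
    push_neg at hcon
    exact absurd (lt_of_lt_of_le (lt_min hcon hlt) h) (lt_irrefl _)
  · have h := hadd x y hx hy hne
    rw [min_eq_left hlt.le] at h
    exact h

private lemma v_sum_dominant (v : L → ℝ)
    (hmul : ∀ x y : L, x ≠ 0 → y ≠ 0 → v (x * y) = v x + v y)
    (hadd : ∀ x y : L, x ≠ 0 → y ≠ 0 → x + y ≠ 0 → min (v x) (v y) ≤ v (x + y))
    {ι : Type*} [DecidableEq ι] (f : ι → L) (S : Finset ι) (a : ι) (haS : a ∈ S)
    (h0 : ∀ i ∈ S, f i ≠ 0) (hlt : ∀ i ∈ S, i ≠ a → v (f a) < v (f i)) :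
    (∑ i ∈ S, f i) ≠ 0 ∧ v (∑ i ∈ S, f i) = v (f a) := by
  have hsum : ∑ i ∈ S, f i = f a + ∑ i ∈ S.erase a, f i :=
    (Finset.add_sum_erase S f haS).symm
  by_cases hR : (∑ i ∈ S.erase a, f i) = 0
  · rw [hsum, hR, add_zero]
    exact ⟨h0 a haS, rfl⟩
  · have hRv : v (f a) < v (∑ i ∈ S.erase a, f i) :=
      v_sum_lt v hadd (v (f a)) f (S.erase a)
        (fun i hi => h0 i (Finset.mem_of_mem_erase hi))
        (fun i hi => hlt i (Finset.mem_of_mem_erase hi) (Finset.ne_of_mem_erase hi))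
        hR
    rw [hsum]
    exact v_dominant v hmul hadd _ _ (h0 a haS) hR hRv

private lemma expand_diff (p : ℕ) (s y : L) :
    (y + s) ^ p - y ^ p =
      ∑ i ∈ Finset.range p, s ^ (i + 1) * y ^ (p - (i + 1)) * (p.choose (i + 1) : L) := by
  rw [add_comm y s, add_pow, Finset.sum_range_succ']
  simp

private lemma term_val (v : L → ℝ)
    (hmul : ∀ x y : L, x ≠ 0 → y ≠ 0 → v (x * y) = v x + v y)
    (hadd : ∀ x y : L, x ≠ 0 → y ≠ 0 → x + y ≠ 0 → min (v x) (v y) ≤ v (x + y))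
    (p : ℕ) (hp : p.Prime) (hvp : v (p : L) = 1)
    (s y : L) (hs : s ≠ 0) (hy : y ≠ 0) (i : ℕ) (hi : i < p) :
    s ^ (i + 1) * y ^ (p - (i + 1)) * (p.choose (i + 1) : L) ≠ 0 ∧
    ∃ e : ℝ, 0 ≤ e ∧ (i + 1 < p → 1 ≤ e) ∧
      v (s ^ (i + 1) * y ^ (p - (i + 1)) * (p.choose (i + 1) : L)) =
        e + ((i : ℝ) + 1) * v s + ((p : ℝ) - ((i : ℝ) + 1)) * v y := by
  have hk : i + 1 ≤ p := hi
  have hC0 : p.choose (i + 1) ≠ 0 := (Nat.choose_pos hk).ne'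
  have hCL : ((p.choose (i + 1) : ℕ) : L) ≠ 0 := Nat.cast_ne_zero.2 hC0
  have hsk : s ^ (i + 1) ≠ 0 := pow_ne_zero _ hs
  have hyk : y ^ (p - (i + 1)) ≠ 0 := pow_ne_zero _ hy
  refine ⟨mul_ne_zero (mul_ne_zero hsk hyk) hCL,
    v ((p.choose (i + 1) : ℕ) : L), v_nat_nonneg v hmul hadd _ hC0, ?_, ?_⟩
  · intro hlt
    obtain ⟨m, hm⟩ := hp.dvd_choose_self (Nat.succ_ne_zero i) hlt
    have hm0 : m ≠ 0 := by
      rintro rfl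
      rw [Nat.mul_zero] at hm
      exact hC0 hm
    have hpl : (p : L) ≠ 0 := Nat.cast_ne_zero.2 hp.ne_zero
    have hml : (m : L) ≠ 0 := Nat.cast_ne_zero.2 hm0
    have hcast : ((p.choose (i + 1) : ℕ) : L) = (p : L) * (m : L) := by
      rw [hm]; push_cast; ring
    rw [hcast, hmul _ _ hpl hml, hvp]
    have := v_nat_nonneg v hmul hadd m hm0
    linarith
  · rw [hmul _ _ (mul_ne_zero hsk hyk) hCL, hmul _ _ hsk hyk,
      v_pow v hmul s hs, v_pow v hmul y hy]
    have hcast : ((p - (i + 1) : ℕ) : ℝ) = (p : ℝ) - ((i : ℝ) + 1) := by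
      rw [Nat.cast_sub hk]; push_cast; ring
    rw [hcast]; push_cast; ring

private lemma key_lt (v : L → ℝ)
    (hmul : ∀ x y : L, x ≠ 0 → y ≠ 0 → v (x * y) = v x + v y)
    (hadd : ∀ x y : L, x ≠ 0 → y ≠ 0 → x + y ≠ 0 → min (v x) (v y) ≤ v (x + y))
    (p : ℕ) (hp : p.Prime) (hvp : v (p : L) = 1)
    (s y : L) (hs : s ≠ 0) (hy : y ≠ 0)
    (hlt : v s < v y + 1 / ((p : ℝ) - 1)) :
    ((y + s) ^ p - y ^ p ≠ 0) ∧ v ((y + s) ^ p - y ^ p) = p * v s := by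
  have hp2 : 2 ≤ p := hp.two_le
  have hP : (2 : ℝ) ≤ (p : ℝ) := by exact_mod_cast hp2
  rw [expand_diff]
  have hmem : p - 1 ∈ Finset.range p := Finset.mem_range.2 (by omega)
  have h0 : ∀ i ∈ Finset.range p,
      s ^ (i + 1) * y ^ (p - (i + 1)) * (p.choose (i + 1) : L) ≠ 0 :=
    fun i hi => (term_val v hmul hadd p hp hvp s y hs hy i (Finset.mem_range.1 hi)).1
  have hfa : s ^ (p - 1 + 1) * y ^ (p - (p - 1 + 1)) * (p.choose (p - 1 + 1) : L)
      = s ^ p := by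
    have hpp : p - 1 + 1 = p := by omega
    rw [hpp]
    simp [Nat.choose_self]
  have hva : v (s ^ (p - 1 + 1) * y ^ (p - (p - 1 + 1)) * (p.choose (p - 1 + 1) : L))
      = p * v s := by rw [hfa, v_pow v hmul s hs]
  have hdom : ∀ i ∈ Finset.range p, i ≠ p - 1 →
      v (s ^ (p - 1 + 1) * y ^ (p - (p - 1 + 1)) * (p.choose (p - 1 + 1) : L)) <
        v (s ^ (i + 1) * y ^ (p - (i + 1)) * (p.choose (i + 1) : L)) := by
    intro i hi hnei
    have hip : i < p := Finset.mem_range.1 hi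
    have hi1 : i + 1 < p := by omega
    obtain ⟨-, e, he0, he1, hve⟩ := term_val v hmul hadd p hp hvp s y hs hy i hip
    have he := he1 hi1
    rw [hva, hve]
    have hK1 : (1 : ℝ) ≤ (i : ℝ) + 1 := by
      have : (0 : ℝ) ≤ (i : ℝ) := Nat.cast_nonneg i
      linarith
    have hKP : (i : ℝ) + 2 ≤ (p : ℝ) := by exact_mod_cast hi1
    have hPK1 : (0 : ℝ) < (p : ℝ) - 1 := by linarith
    have h1 : ((p : ℝ) - 1) * (v s - v y) < 1 := by
      have h := (lt_div_iff₀ hPK1).1 (by linarith : v s - v y < 1 / ((p : ℝ) - 1))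
      linarith [h]
    have h2 : ((p : ℝ) - ((i : ℝ) + 1)) * (v s - v y) < 1 := by
      rcases le_or_gt 0 (v s - v y) with h | h
      · nlinarith
      · nlinarith
    nlinarith [h2, he]
  have hres := v_sum_dominant v hmul hadd
    (fun i => s ^ (i + 1) * y ^ (p - (i + 1)) * (p.choose (i + 1) : L))
    (Finset.range p) (p - 1) hmem h0 hdom
  exact ⟨hres.1, by rw [hres.2]; exact hva⟩

private lemma key_gt (v : L → ℝ)
    (hmul : ∀ x y : L, x ≠ 0 → y ≠ 0 → v (x * y) = v x + v y)
    (hadd : ∀ x y : L, x ≠ 0 → y ≠ 0 → x + y ≠ 0 → min (v x) (v y) ≤ v (x + y))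
    (p : ℕ) (hp : p.Prime) (hvp : v (p : L) = 1)
    (s y : L) (hs : s ≠ 0) (hy : y ≠ 0)
    (hgt : v y + 1 / ((p : ℝ) - 1) < v s) :
    ((y + s) ^ p - y ^ p ≠ 0) ∧
      v ((y + s) ^ p - y ^ p) = 1 + v s + ((p : ℝ) - 1) * v y := by
  have hp2 : 2 ≤ p := hp.two_le
  have hP : (2 : ℝ) ≤ (p : ℝ) := by exact_mod_cast hp2
  have hPK1 : (0 : ℝ) < (p : ℝ) - 1 := by linarith
  have htw : v y < v s := by
    have : (0 : ℝ) < 1 / ((p : ℝ) - 1) := by positivity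
    linarith
  have h1 : 1 < ((p : ℝ) - 1) * (v s - v y) := by
    have h := (div_lt_iff₀ hPK1).1 (by linarith : 1 / ((p : ℝ) - 1) < v s - v y)
    linarith [h]
  rw [expand_diff]
  have hmem : 0 ∈ Finset.range p := Finset.mem_range.2 (by omega)
  have h0 : ∀ i ∈ Finset.range p,
      s ^ (i + 1) * y ^ (p - (i + 1)) * (p.choose (i + 1) : L) ≠ 0 :=
    fun i hi => (term_val v hmul hadd p hp hvp s y hs hy i (Finset.mem_range.1 hi)).1
  have hpl : (p : L) ≠ 0 := Nat.cast_ne_zero.2 hp.ne_zero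
  have hy1 : y ^ (p - 1) ≠ 0 := pow_ne_zero _ hy
  have hva : v (s ^ (0 + 1) * y ^ (p - (0 + 1)) * (p.choose (0 + 1) : L))
      = 1 + v s + ((p : ℝ) - 1) * v y := by
    have hch : p.choose (0 + 1) = p := Nat.choose_one_right p
    rw [hch]
    rw [hmul _ _ (mul_ne_zero (pow_ne_zero _ hs) (pow_ne_zero _ hy)) hpl,
      hmul _ _ (pow_ne_zero _ hs) (pow_ne_zero _ hy),
      v_pow v hmul s hs, v_pow v hmul y hy, hvp]
    have hcast : ((p - (0 + 1) : ℕ) : ℝ) = (p : ℝ) - 1 := by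
      rw [Nat.cast_sub (by omega)]; push_cast; ring
    rw [hcast]; push_cast; ring
  have hdom : ∀ i ∈ Finset.range p, i ≠ 0 →
      v (s ^ (0 + 1) * y ^ (p - (0 + 1)) * (p.choose (0 + 1) : L)) <
        v (s ^ (i + 1) * y ^ (p - (i + 1)) * (p.choose (i + 1) : L)) := by
    intro i hi hnei
    have hip : i < p := Finset.mem_range.1 hi
    obtain ⟨-, e, he0, he1, hve⟩ := term_val v hmul hadd p hp hvp s y hs hy i hip
    rw [hva, hve]
    have hK2 : (2 : ℝ) ≤ (i : ℝ) + 1 := by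
      have : 1 ≤ i := by omega
      have : (1 : ℝ) ≤ (i : ℝ) := by exact_mod_cast this
      linarith
    rcases eq_or_lt_of_le (Nat.succ_le_of_lt hip) with heq | hlt'
    · -- i + 1 = p
      have hKP : (i : ℝ) + 1 = (p : ℝ) := by exact_mod_cast heq
      rw [hKP]
      nlinarith [h1, he0]
    · have he := he1 hlt'
      nlinarith [he, hK2, htw]
  have hres := v_sum_dominant v hmul hadd
    (fun i => s ^ (i + 1) * y ^ (p - (i + 1)) * (p.choose (i + 1) : L))
    (Finset.range p) 0 hmem h0 hdom
  exact ⟨hres.1, by rw [hres.2]; exact hva⟩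

private lemma key_ge (v : L → ℝ)
    (hmul : ∀ x y : L, x ≠ 0 → y ≠ 0 → v (x * y) = v x + v y)
    (hadd : ∀ x y : L, x ≠ 0 → y ≠ 0 → x + y ≠ 0 → min (v x) (v y) ≤ v (x + y))
    (p : ℕ) (hp : p.Prime) (hvp : v (p : L) = 1)
    (s y : L) (hs : s ≠ 0) (hy : y ≠ 0)
    (hge : v y + 1 / ((p : ℝ) - 1) ≤ v s)
    (hd : (y + s) ^ p - y ^ p ≠ 0) :
    (p : ℝ) * v y + (p : ℝ) / ((p : ℝ) - 1) ≤ v ((y + s) ^ p - y ^ p) := by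
  have hp2 : 2 ≤ p := hp.two_le
  have hP : (2 : ℝ) ≤ (p : ℝ) := by exact_mod_cast hp2
  have hPK1 : (0 : ℝ) < (p : ℝ) - 1 := by linarith
  have hu : (0 : ℝ) < 1 / ((p : ℝ) - 1) := by positivity
  have hPu : (p : ℝ) / ((p : ℝ) - 1) = 1 + 1 / ((p : ℝ) - 1) := by
    field_simp; ring
  rw [expand_diff] at hd ⊢
  apply v_sum_le v hadd _ _ _
    (fun i hi => (term_val v hmul hadd p hp hvp s y hs hy i (Finset.mem_range.1 hi)).1)
    ?_ hd
  intro i hi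
  have hip : i < p := Finset.mem_range.1 hi
  obtain ⟨-, e, he0, he1, hve⟩ := term_val v hmul hadd p hp hvp s y hs hy i hip
  rw [hve]
  have hK1 : (1 : ℝ) ≤ (i : ℝ) + 1 := by
    have : (0 : ℝ) ≤ (i : ℝ) := Nat.cast_nonneg i
    linarith
  rcases eq_or_lt_of_le (Nat.succ_le_of_lt hip) with heq | hlt'
  · have hKP : (i : ℝ) + 1 = (p : ℝ) := by exact_mod_cast heq
    rw [hKP, hPu]
    have hPu2 : (p : ℝ) * (1 / ((p : ℝ) - 1)) = 1 + 1 / ((p : ℝ) - 1) := by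
      rw [mul_one_div]; exact hPu
    nlinarith [he0, hPu2,
      mul_nonneg (by linarith : (0 : ℝ) ≤ (p : ℝ))
        (by linarith : (0 : ℝ) ≤ v s - v y - 1 / ((p : ℝ) - 1))]
  · have he := he1 hlt'
    have hKP : (i : ℝ) + 1 ≤ (p : ℝ) - 1 := by
      have : i + 2 ≤ p := hlt'
      have : (i : ℝ) + 2 ≤ (p : ℝ) := by exact_mod_cast this
      linarith
    rw [hPu]
    nlinarith [he, hu,
      mul_nonneg (by linarith : (0 : ℝ) ≤ (i : ℝ) + 1)
        (by linarith : (0 : ℝ) ≤ v s - v y - 1 / ((p : ℝ) - 1)),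
      mul_nonneg (by linarith : (0 : ℝ) ≤ (i : ℝ)) hu.le]

end Helpers


/-- Let `p` be prime, `L` a (characteristic-zero) field with an additive
real-valued valuation `v` normalized by `v p = 1` (extending the valuation of a
finite extension `K` of `ℚ_p`), `c` with `-p/(p-1) < v c < 0`, and
`f z = z ^ p - c`.  Suppose every iterated preimage `α` of `a` satisfies
`v α = v c / p`.  If `(αₙ)`, `(βₙ)` are preimage sequences of `a` with
`β 1 ≠ α 1`, then `v (β n - α n) = (v c / p + 1/(p-1)) / p ^ (n-1)` for `n ≥ 1`. -/
theorem slightly_negative_valuation_differences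
    {L : Type*} [Field L] [CharZero L] (v : L → ℝ)
    (hmul : ∀ x y : L, x ≠ 0 → y ≠ 0 → v (x * y) = v x + v y)
    (hadd : ∀ x y : L, x ≠ 0 → y ≠ 0 → x + y ≠ 0 → min (v x) (v y) ≤ v (x + y))
    (p : ℕ) (hp : p.Prime) (hvp : v (p : L) = 1)
    (c a : L) (hc : c ≠ 0)
    (hvc₁ : -(p : ℝ) / (p - 1) < v c) (hvc₂ : v c < 0)
    (hpre : ∀ n : ℕ, 1 ≤ n → ∀ z : L, (fun w : L => w ^ p - c)^[n] z = a →
      v z = v c / p)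
    (α β : ℕ → L) (hα0 : α 0 = a) (hβ0 : β 0 = a)
    (hαrec : ∀ n, (α (n + 1)) ^ p - c = α n)
    (hβrec : ∀ n, (β (n + 1)) ^ p - c = β n)
    (hne : β 1 ≠ α 1) :
    ∀ n, 1 ≤ n → v (β n - α n) = (v c / p + 1 / (p - 1 : ℝ)) / p ^ (n - 1) := by
  have hp2 : 2 ≤ p := hp.two_le
  have hP : (2 : ℝ) ≤ (p : ℝ) := by exact_mod_cast hp2
  have hPK1 : (0 : ℝ) < (p : ℝ) - 1 := by linarith
  have hP0 : (0 : ℝ) < (p : ℝ) := by linarith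
  have hvc1' : -(p : ℝ) < v c * ((p : ℝ) - 1) := by
    have h := (div_lt_iff₀ hPK1).1 hvc₁
    linarith
  have hiterα : ∀ n, (fun w : L => w ^ p - c)^[n] (α n) = a := by
    intro n
    induction n with
    | zero => simpa using hα0
    | succ n ih =>
      rw [Function.iterate_succ_apply, hαrec n]
      exact ih
  have hvα : ∀ n, 1 ≤ n → v (α n) = v c / p := fun n hn => hpre n hn _ (hiterα n)
  have hαne : ∀ n, 1 ≤ n → α (n + 1) ≠ 0 := by
    intro n hn h0
    have h1 : α n = -c := by
      rw [← hαrec n, h0, zero_pow hp.ne_zero, zero_sub]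
    have h2 : v (α n) = v c := by rw [h1, v_neg v hmul c hc]
    rw [hvα n hn] at h2
    have h3 : v c = v c * (p : ℝ) := (div_eq_iff (ne_of_gt hP0)).1 h2
    nlinarith [hvc₂, hP]
  have hα1 : α 1 ≠ 0 := by
    intro h0
    have ha : a = -c := by
      rw [← hα0, ← hαrec 0, h0, zero_pow hp.ne_zero, zero_sub]
    have hb : β 1 ^ p = 0 := by
      have h := hβrec 0
      rw [hβ0, ha] at h
      linear_combination h
    have hb0 : β 1 = 0 := (pow_eq_zero_iff hp.ne_zero).1 hb
    exact hne (hb0.trans h0.symm)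
  set E := v c / (p : ℝ) + 1 / ((p : ℝ) - 1) with hE
  have hEmul : E * ((p : ℝ) * ((p : ℝ) - 1)) = v c * ((p : ℝ) - 1) + (p : ℝ) := by
    rw [hE]; field_simp
  have hEpos : 0 < E := by
    nlinarith [hvc1', mul_pos hP0 hPK1]
  have hElt : E < v c + (p : ℝ) / ((p : ℝ) - 1) := by
    have hid : (v c + (p : ℝ) / ((p : ℝ) - 1) - E) * ((p : ℝ) * ((p : ℝ) - 1))
        = (v c * ((p : ℝ) - 1) + (p : ℝ)) * ((p : ℝ) - 1) := by
      rw [hE]; field_simp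
    nlinarith [hvc1', mul_pos hP0 hPK1, hPK1]
  have main : ∀ n, 1 ≤ n → (β n - α n ≠ 0 ∧ v (β n - α n) = E / (p : ℝ) ^ (n - 1)) := by
    intro n hn
    induction n, hn using Nat.le_induction with
    | base =>
      have hs : β 1 - α 1 ≠ 0 := sub_ne_zero.2 hne
      have hd0 : (α 1 + (β 1 - α 1)) ^ p - (α 1) ^ p = 0 := by
        have hb1 : α 1 + (β 1 - α 1) = β 1 := by ring
        rw [hb1]
        have h1 := hβrec 0
        have h2 := hαrec 0
        have h3 : β 1 ^ p - α 1 ^ p = (β 1 ^ p - c) - (α 1 ^ p - c) := by ring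
        rw [h3, h1, h2, hβ0, hα0, sub_self]
      have hnot1 : ¬ (v (β 1 - α 1) < v (α 1) + 1 / ((p : ℝ) - 1)) := fun h =>
        (key_lt v hmul hadd p hp hvp _ _ hs hα1 h).1 hd0
      have hnot2 : ¬ (v (α 1) + 1 / ((p : ℝ) - 1) < v (β 1 - α 1)) := fun h =>
        (key_gt v hmul hadd p hp hvp _ _ hs hα1 h).1 hd0
      have heq : v (β 1 - α 1) = v (α 1) + 1 / ((p : ℝ) - 1) :=
        le_antisymm (not_lt.1 hnot2) (not_lt.1 hnot1)
      refine ⟨hs, ?_⟩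
      rw [heq, hvα 1 le_rfl]
      norm_num
      rw [hE, one_div]
    | succ n hn ih =>
      obtain ⟨hdne, hdv⟩ := ih
      have hy : α (n + 1) ≠ 0 := hαne n hn
      have hs : β (n + 1) - α (n + 1) ≠ 0 := by
        intro h0
        have hβα : β (n + 1) = α (n + 1) := sub_eq_zero.1 h0
        have hba : β n = α n := by rw [← hβrec n, ← hαrec n, hβα]
        exact hdne (by rw [hba, sub_self])
      have hdd : (α (n + 1) + (β (n + 1) - α (n + 1))) ^ p - (α (n + 1)) ^ p
          = β n - α n := by
        have hb1 : α (n + 1) + (β (n + 1) - α (n + 1)) = β (n + 1) := by ring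
        rw [hb1]
        have h1 := hβrec n
        have h2 := hαrec n
        have h3 : β (n + 1) ^ p - α (n + 1) ^ p
            = (β (n + 1) ^ p - c) - (α (n + 1) ^ p - c) := by ring
        rw [h3, h1, h2]
      have hw : v (α (n + 1)) = v c / p := hvα (n + 1) (by omega)
      have hcase : v (β (n + 1) - α (n + 1)) < v (α (n + 1)) + 1 / ((p : ℝ) - 1) := by
        by_contra hcon
        push_neg at hcon
        have hge := key_ge v hmul hadd p hp hvp _ _ hs hy hcon
          (by rw [hdd]; exact hdne)
        rw [hdd, hdv, hw] at hge
        have h1 : (p : ℝ) * (v c / (p : ℝ)) = v c := by field_simp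
        rw [h1] at hge
        have h2 : E / (p : ℝ) ^ (n - 1) ≤ E :=
          div_le_self hEpos.le (one_le_pow₀ (by linarith : (1 : ℝ) ≤ (p : ℝ)))
        linarith [hElt]
      have hkey := key_lt v hmul hadd p hp hvp _ _ hs hy hcase
      rw [hdd, hdv] at hkey
      refine ⟨hs, ?_⟩
      have hppow : (p : ℝ) ^ (n - 1) * (p : ℝ) = (p : ℝ) ^ n := by
        rw [← pow_succ]
        congr 1
        omega
      have hps : v (β (n + 1) - α (n + 1)) = E / (p : ℝ) ^ (n - 1) / (p : ℝ) := by
        rw [eq_div_iff (ne_of_gt hP0)]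
        linarith [hkey.2]
      rw [hps, div_div, hppow]
      norm_num
  intro n hn
  exact (main n hn).2
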